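/- Likelihood ratio characterization for the rounded, thresholded Laplace mechanism: fix ε > 0 and define, for n ∈ ℕ, p₀(n) and p₁(n) as follows: p₀(0) = ∫_{−∞}^{1/2} (ε/2)·exp(−ε|x|) dx and p₀(n) = ∫_{n−1/2}^{n+1/2} (ε/2)·exp(−ε|x|) dx for n ≥ 1; p₁(0) = ∫_{−∞}^{1/2} (ε/2)·exp(−ε|x−1|) dx and p₁(n) = ∫_{n−1/2}^{n+1/2} (ε/2)·exp(−ε|x−1|) dx for n ≥ 1. Then for every n ∈ ℕ, p₀(n) ≥ p₁(n) if and only if n = 0. -/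

import Mathlib

open MeasureTheory Real intervalIntegral

private lemma integrableOn_exp_mul_Iic' {ε : ℝ} (hε : 0 < ε) (c : ℝ) :
    IntegrableOn (fun x : ℝ => Real.exp (ε * x)) (Set.Iic c) := by
  have h : IntegrableOn (fun x : ℝ => Real.exp (-ε * x)) (Set.Ioi (-c)) :=
    exp_neg_integrableOn_Ioi (-c) hε
  have := (Measure.measurePreserving_neg (volume : Measure ℝ)).integrableOn_comp_preimage
      (Homeomorph.neg ℝ).measurableEmbedding (f := fun x : ℝ => Real.exp (-ε * x))
      (s := Set.Ioi (-c))
  replace h := this.2 h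
  simp only [Function.comp_def, Set.neg_preimage, Set.neg_Ioi, neg_neg] at h
  have h' : IntegrableOn (fun x : ℝ => Real.exp (ε * x)) (Set.Iio c) := by
    refine h.congr_fun (fun x _ => ?_) measurableSet_Iio
    ring_nf
  rwa [← integrableOn_Iic_iff_integrableOn_Iio] at h'

private lemma integrableOn_laplace_Iic {ε : ℝ} (hε : 0 < ε) (μ c : ℝ) :
    IntegrableOn (fun x : ℝ => (ε / 2) * Real.exp (-ε * |x - μ|)) (Set.Iic c) := by
  have hint : IntegrableOn (fun x : ℝ => (ε / 2) * Real.exp (-ε * μ) * Real.exp (ε * x))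
      (Set.Iic c) := ((integrableOn_exp_mul_Iic' hε c).const_mul _)
  refine hint.mono' ?_ ?_
  · exact (Continuous.aestronglyMeasurable (by fun_prop)).restrict
  · filter_upwards with x
    have h1 : -ε * |x - μ| ≤ -ε * μ + ε * x := by
      have : -(x - μ) ≤ |x - μ| := neg_le_abs _
      nlinarith [abs_nonneg (x - μ)]
    have h2 : Real.exp (-ε * |x - μ|) ≤ Real.exp (-ε * μ) * Real.exp (ε * x) := by
      rw [← Real.exp_add]; exact Real.exp_le_exp.2 h1
    have hpos : (0 : ℝ) ≤ ε / 2 := by linarith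
    rw [Real.norm_eq_abs, abs_of_nonneg (by positivity)]
    calc ε / 2 * Real.exp (-ε * |x - μ|) ≤ ε / 2 * (Real.exp (-ε * μ) * Real.exp (ε * x)) :=
          mul_le_mul_of_nonneg_left h2 hpos
      _ = ε / 2 * Real.exp (-ε * μ) * Real.exp (ε * x) := by ring

/-- Likelihood ratio characterization for the rounded, thresholded Laplace
mechanism: the bin probability under location `0` is at least the bin
probability under location `1` exactly at the bin `n = 0`. -/
theorem laplace_likelihood_ratio_characterization (ε : ℝ) (hε : 0 < ε)
    (p₀ p₁ : ℕ → ℝ)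
    (hp₀ : ∀ n : ℕ,
      p₀ n = if n = 0 then ∫ x in Set.Iic (1 / 2 : ℝ), (ε / 2) * Real.exp (-ε * |x|)
        else ∫ x in ((n : ℝ) - 1 / 2)..((n : ℝ) + 1 / 2), (ε / 2) * Real.exp (-ε * |x|))
    (hp₁ : ∀ n : ℕ,
      p₁ n = if n = 0 then ∫ x in Set.Iic (1 / 2 : ℝ), (ε / 2) * Real.exp (-ε * |x - 1|)
        else ∫ x in ((n : ℝ) - 1 / 2)..((n : ℝ) + 1 / 2), (ε / 2) * Real.exp (-ε * |x - 1|)) :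
    ∀ n : ℕ, p₀ n ≥ p₁ n ↔ n = 0 := by
  intro n
  rcases Nat.eq_zero_or_pos n with rfl | hn
  · simp only [hp₀ 0, hp₁ 0, if_pos rfl, iff_true]
    have h0 : IntegrableOn (fun x : ℝ => (ε / 2) * Real.exp (-ε * |x - 0|))
        (Set.Iic (1 / 2 : ℝ)) := integrableOn_laplace_Iic hε 0 _
    simp only [sub_zero] at h0
    have h1 : IntegrableOn (fun x : ℝ => (ε / 2) * Real.exp (-ε * |x - 1|))
        (Set.Iic (1 / 2 : ℝ)) := integrableOn_laplace_Iic hε 1 _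
    refine setIntegral_mono_on h1 h0 measurableSet_Iic ?_
    intro x hx
    have hx' : x ≤ 1 / 2 := hx
    have habs : |x| ≤ |x - 1| := by
      rw [abs_of_nonpos (by linarith : x - 1 ≤ 0)]
      exact abs_le.2 ⟨by linarith, by linarith⟩
    have : -ε * |x - 1| ≤ -ε * |x| := by nlinarith
    exact mul_le_mul_of_nonneg_left (Real.exp_le_exp.2 this) (by linarith)
  · have hne : n ≠ 0 := hn.ne'
    simp only [hp₀ n, hp₁ n, if_neg hne, ge_iff_le, hne, iff_false, not_le]
    have hn1 : (1 : ℝ) ≤ (n : ℝ) := by exact_mod_cast hn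
    have hab : (n : ℝ) - 1 / 2 < (n : ℝ) + 1 / 2 := by linarith
    have hc0 : Continuous fun x : ℝ => (ε / 2) * Real.exp (-ε * |x|) := by fun_prop
    have hc1 : Continuous fun x : ℝ => (ε / 2) * Real.exp (-ε * |x - 1|) := by fun_prop
    refine intervalIntegral.integral_lt_integral_of_continuousOn_of_le_of_exists_lt hab
      hc0.continuousOn hc1.continuousOn ?_ ?_
    · intro x hx
      have hx1 : (n : ℝ) - 1 / 2 < x := hx.1
      have habs : |x - 1| < |x| := by
        have hx0 : (1 : ℝ) / 2 < x := by linarith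
        rw [abs_of_pos (by linarith : (0 : ℝ) < x)]
        exact abs_lt.2 ⟨by linarith, by linarith⟩
      have : -ε * |x| ≤ -ε * |x - 1| := by nlinarith
      exact mul_le_mul_of_nonneg_left (Real.exp_le_exp.2 this) (by linarith)
    · refine ⟨(n : ℝ), ⟨by linarith, by linarith⟩, ?_⟩
      have habs : |(n : ℝ) - 1| < |(n : ℝ)| := by
        rw [abs_of_pos (by linarith : (0 : ℝ) < (n : ℝ))]
        exact abs_lt.2 ⟨by linarith, by linarith⟩
      have : -ε * |(n : ℝ)| < -ε * |(n : ℝ) - 1| := by nlinarith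
      exact mul_lt_mul_of_pos_left (Real.exp_lt_exp.2 this) (by linarith)
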